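/- arXiv:0906.5375 — 4 statements merged into one kernel-verified Lean document; each statement's English description precedes it below -/
import Mathlib

section
/- Let P satisfy the Lasota-Yorke inequality V(Pf) ≤ α₀·V(f) + B₀·‖f‖₁ with α₀ < 1/3, and ‖Pf‖₁ ≤ ‖f‖₁. Define the hole operator P_H f = P(f·χ_{X₀}) where X₀ = [0,1]\H and H is an open interval. Then V(P_H f) ≤ 3α₀·V(f) + (2α₀ + B₀)·‖f‖₁ for all f ∈ BV([0,1]). -/
open MeasureTheory Set ENNReal

noncomputable def bvVar (f : ℝ → ℝ) : ℝ≥0∞ := eVariationOn f (Set.Icc 0 1)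

noncomputable def l1Norm (f : ℝ → ℝ) : ℝ≥0∞ := ∫⁻ x in Set.Icc (0:ℝ) 1, (‖f x‖₊ : ℝ≥0∞)

lemma edist_zero_eq_nnnorm (x : ℝ) : edist x 0 = (‖x‖₊ : ℝ≥0∞) := by
  rw [edist_eq_enorm_sub, sub_zero, enorm_eq_nnnorm]

/-- A sum of indicators of a "subsingleton" predicate is at most one copy of the constant. -/
lemma sum_ite_le_of_subsingleton (c : ℝ≥0∞) (p : ℕ → Prop) [DecidablePred p]
    (hp : ∀ i j, i < j → p i → p j → False) (n : ℕ) :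
    ∑ i ∈ Finset.range n, (if p i then c else 0) ≤ c := by
  classical
  rw [← Finset.sum_filter]
  have hcard : ((Finset.range n).filter p).card ≤ 1 := by
    apply Finset.card_le_one.2
    intro i hi j hj
    simp only [Finset.mem_filter] at hi hj
    by_contra hne
    rcases lt_or_gt_of_ne hne with h | h
    · exact hp i j h hi.2 hj.2
    · exact hp j i h hj.2 hi.2
  calc ∑ _i ∈ (Finset.range n).filter p, c
      = ((Finset.range n).filter p).card • c := Finset.sum_const c
    _ ≤ 1 • c := smul_le_smul_of_nonneg_right (by exact_mod_cast hcard) zero_le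
    _ = c := one_smul _ _

/-- Variation of a function vanishing strictly inside `[c,d]` is at most the sum of the
norms of the endpoint values. -/
lemma middle_var (g : ℝ → ℝ) (c d : ℝ) (hcd : c < d) (hg : ∀ x ∈ Set.Ioo c d, g x = 0) :
    eVariationOn g (Set.Icc c d) ≤ (‖g c‖₊ : ℝ≥0∞) + (‖g d‖₊ : ℝ≥0∞) := by
  classical
  apply iSup_le
  rintro ⟨n, ⟨u, hu, us⟩⟩
  have key : ∀ i, edist (g (u (i + 1))) (g (u i))
      ≤ (if u i = c ∧ u (i + 1) ≠ c then (‖g c‖₊ : ℝ≥0∞) else 0)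
        + (if u i ≠ d ∧ u (i + 1) = d then (‖g d‖₊ : ℝ≥0∞) else 0) := by
    intro i
    have hx := us i
    have hy := us (i + 1)
    have hxy : u i ≤ u (i + 1) := hu (Nat.le_succ i)
    by_cases hyc : u (i + 1) = c
    · have hxc : u i = c := le_antisymm (hyc ▸ hxy) hx.1
      rw [hxc, hyc, edist_self]
      exact zero_le
    · by_cases hxd : u i = d
      · have hyd : u (i + 1) = d := le_antisymm hy.2 (hxd ▸ hxy)
        rw [hxd, hyd, edist_self]
        exact zero_le
      · by_cases hxc : u i = c
        · by_cases hyd : u (i + 1) = d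
          · rw [if_pos ⟨hxc, hyc⟩, if_pos ⟨hxd, hyd⟩, hxc, hyd]
            calc edist (g d) (g c) ≤ edist (g d) 0 + edist 0 (g c) := edist_triangle _ _ _
              _ = (‖g c‖₊ : ℝ≥0∞) + (‖g d‖₊ : ℝ≥0∞) := by
                  rw [edist_comm (0:ℝ), edist_zero_eq_nnnorm, edist_zero_eq_nnnorm, add_comm]
          · have hyIoo : u (i + 1) ∈ Set.Ioo c d :=
              ⟨lt_of_le_of_ne (hxc ▸ hxy) (Ne.symm hyc), lt_of_le_of_ne hy.2 hyd⟩
            rw [hg _ hyIoo, if_pos ⟨hxc, hyc⟩,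
              if_neg (fun h => hyd h.2), add_zero, hxc, edist_comm, edist_zero_eq_nnnorm]
        · have hxIoo : u i ∈ Set.Ioo c d :=
            ⟨lt_of_le_of_ne hx.1 (Ne.symm hxc), lt_of_le_of_ne hx.2 hxd⟩
          by_cases hyd : u (i + 1) = d
          · rw [hg _ hxIoo, if_neg (fun h => hxc h.1), if_pos ⟨hxd, hyd⟩, zero_add, hyd,
              edist_zero_eq_nnnorm]
          · have hyIoo : u (i + 1) ∈ Set.Ioo c d :=
              ⟨lt_of_lt_of_le hxIoo.1 hxy, lt_of_le_of_ne hy.2 hyd⟩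
            rw [hg _ hxIoo, hg _ hyIoo, edist_self]
            exact zero_le
  calc ∑ i ∈ Finset.range n, edist (g (u (i + 1))) (g (u i))
      ≤ ∑ i ∈ Finset.range n,
          ((if u i = c ∧ u (i + 1) ≠ c then (‖g c‖₊ : ℝ≥0∞) else 0)
            + (if u i ≠ d ∧ u (i + 1) = d then (‖g d‖₊ : ℝ≥0∞) else 0)) :=
        Finset.sum_le_sum fun i _ => key i
    _ = (∑ i ∈ Finset.range n, if u i = c ∧ u (i + 1) ≠ c then (‖g c‖₊ : ℝ≥0∞) else 0)
        + ∑ i ∈ Finset.range n, if u i ≠ d ∧ u (i + 1) = d then (‖g d‖₊ : ℝ≥0∞) else 0 :=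
        Finset.sum_add_distrib
    _ ≤ (‖g c‖₊ : ℝ≥0∞) + (‖g d‖₊ : ℝ≥0∞) := by
        apply add_le_add
        · apply sum_ite_le_of_subsingleton
          rintro i j hij ⟨hic, hic'⟩ ⟨hjc, -⟩
          exact hic' (le_antisymm (hjc ▸ hu (Nat.succ_le_of_lt hij)) (hic ▸ hu (Nat.le_succ i)))
        · apply sum_ite_le_of_subsingleton
          rintro i j hij ⟨-, hid'⟩ ⟨hjd, -⟩
          exact hjd (le_antisymm (us j).2 (hid' ▸ hu (Nat.succ_le_of_lt hij)))

/-- The sup-norm bound: `|f x| ≤ V(f) + ‖f‖₁` for `x ∈ [0,1]`. -/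
lemma nnnorm_le_var_add_l1 (f : ℝ → ℝ) {x : ℝ} (hx : x ∈ Set.Icc (0:ℝ) 1) :
    (‖f x‖₊ : ℝ≥0∞) ≤ bvVar f + l1Norm f := by
  have key : ∀ y ∈ Set.Icc (0:ℝ) 1, (‖f x‖₊ : ℝ≥0∞) ≤ (‖f y‖₊ : ℝ≥0∞) + bvVar f := by
    intro y hy
    have h1 : edist (f x) (f y) ≤ bvVar f := eVariationOn.edist_le f hx hy
    calc (‖f x‖₊ : ℝ≥0∞) = edist (f x) 0 := (edist_zero_eq_nnnorm _).symm
      _ ≤ edist (f x) (f y) + edist (f y) 0 := edist_triangle _ _ _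
      _ ≤ bvVar f + (‖f y‖₊ : ℝ≥0∞) := by
          rw [edist_zero_eq_nnnorm]
          exact add_le_add h1 le_rfl
      _ = (‖f y‖₊ : ℝ≥0∞) + bvVar f := add_comm _ _
  have hvol : volume (Set.Icc (0:ℝ) 1) = 1 := by
    rw [Real.volume_Icc]; norm_num
  have h2 : (‖f x‖₊ : ℝ≥0∞) = ∫⁻ _ in Set.Icc (0:ℝ) 1, (‖f x‖₊ : ℝ≥0∞) := by
    rw [setLIntegral_const, hvol, mul_one]
  rw [h2]
  calc ∫⁻ _ in Set.Icc (0:ℝ) 1, (‖f x‖₊ : ℝ≥0∞)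
      ≤ ∫⁻ y in Set.Icc (0:ℝ) 1, ((‖f y‖₊ : ℝ≥0∞) + bvVar f) := by
        apply lintegral_mono_ae
        filter_upwards [ae_restrict_mem measurableSet_Icc] with y hy
        exact key y hy
    _ = l1Norm f + bvVar f * volume (Set.Icc (0:ℝ) 1) := by
        rw [lintegral_add_right _ measurable_const, lintegral_const,
          Measure.restrict_apply_univ]
        rfl
    _ = l1Norm f + bvVar f := by rw [hvol, mul_one]
    _ = bvVar f + l1Norm f := add_comm _ _

/-- if `P` satisfies `V(Pf) ≤ α₀ V(f) + B₀ ‖f‖₁` with `α₀ < 1/3` and is an `L¹`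
contraction, then the hole operator `P_H f = P(f·χ_{X₀})`, `X₀ = [0,1] \ H` with `H` an open
interval, satisfies `V(P_H f) ≤ 3α₀ V(f) + (2α₀ + B₀) ‖f‖₁` for all `f ∈ BV([0,1])`. -/
theorem hole_operator_lasota_yorke
    (P : (ℝ → ℝ) → (ℝ → ℝ)) (α₀ B₀ : ℝ)
    (hα₀ : 0 < α₀) (hα₁ : α₀ < 1/3) (hB₀ : 0 ≤ B₀)
    (hLY : ∀ f, bvVar (P f) ≤ ENNReal.ofReal α₀ * bvVar f + ENNReal.ofReal B₀ * l1Norm f)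
    (hL1 : ∀ f, l1Norm (P f) ≤ l1Norm f)
    (a b : ℝ) (hab : Set.Ioo a b ⊆ Set.Icc 0 1) :
    ∀ f, BoundedVariationOn f (Set.Icc 0 1) →
      bvVar (P ((Set.Icc (0:ℝ) 1 \ Set.Ioo a b).indicator f))
        ≤ ENNReal.ofReal (3 * α₀) * bvVar f + ENNReal.ofReal (2 * α₀ + B₀) * l1Norm f := by
  intro f hf
  set g : ℝ → ℝ := (Set.Icc (0:ℝ) 1 \ Set.Ioo a b).indicator f with hg
  -- ‖g‖₁ ≤ ‖f‖₁
  have hl1g : l1Norm g ≤ l1Norm f := by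
    apply lintegral_mono
    intro x
    simp only [hg, Set.indicator_apply]
    split
    · exact le_rfl
    · simp
  -- V(g) ≤ 3 V(f) + 2 ‖f‖₁
  have hvarg : bvVar g ≤ 3 * bvVar f + 2 * l1Norm f := by
    by_cases hcd : a < b
    · -- the hole is a genuine interval; its closure lies in [0,1]
      have hsub : Set.Icc a b ⊆ Set.Icc (0:ℝ) 1 := by
        rw [← closure_Ioo hcd.ne]
        exact closure_minimal hab isClosed_Icc
      have ha : a ∈ Set.Icc (0:ℝ) 1 := hsub (Set.left_mem_Icc.2 hcd.le)
      have hb : b ∈ Set.Icc (0:ℝ) 1 := hsub (Set.right_mem_Icc.2 hcd.le)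
      have haX : a ∈ Set.Icc (0:ℝ) 1 \ Set.Ioo a b := ⟨ha, fun h => lt_irrefl a h.1⟩
      have hbX : b ∈ Set.Icc (0:ℝ) 1 \ Set.Ioo a b := ⟨hb, fun h => lt_irrefl b h.2⟩
      -- splitting identities
      have splitg1 := eVariationOn.Icc_add_Icc g (s := Set.Icc (0:ℝ) 1) ha.1 ha.2 ha
      have splitg2 := eVariationOn.Icc_add_Icc g (s := Set.Icc (0:ℝ) 1) hcd.le hb.2 hb
      have splitf1 := eVariationOn.Icc_add_Icc f (s := Set.Icc (0:ℝ) 1) ha.1 ha.2 ha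
      have splitf2 := eVariationOn.Icc_add_Icc f (s := Set.Icc (0:ℝ) 1) hcd.le hb.2 hb
      rw [Set.inter_self] at splitg1 splitf1
      -- g = f on the two outer pieces
      have hleft : eVariationOn g (Set.Icc (0:ℝ) 1 ∩ Set.Icc 0 a)
          = eVariationOn f (Set.Icc (0:ℝ) 1 ∩ Set.Icc 0 a) := by
        apply eVariationOn.eq_of_eqOn
        intro x hx
        have hx' : x ∈ Set.Icc (0:ℝ) 1 \ Set.Ioo a b :=
          ⟨hx.1, fun h => not_lt.2 hx.2.2 h.1⟩
        exact Set.indicator_of_mem hx' f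
      have hright : eVariationOn g (Set.Icc (0:ℝ) 1 ∩ Set.Icc b 1)
          = eVariationOn f (Set.Icc (0:ℝ) 1 ∩ Set.Icc b 1) := by
        apply eVariationOn.eq_of_eqOn
        intro x hx
        have hx' : x ∈ Set.Icc (0:ℝ) 1 \ Set.Ioo a b :=
          ⟨hx.1, fun h => not_lt.2 hx.2.1 h.2⟩
        exact Set.indicator_of_mem hx' f
      -- the middle piece
      have hmidset : Set.Icc (0:ℝ) 1 ∩ Set.Icc a b = Set.Icc a b :=
        Set.inter_eq_self_of_subset_right hsub
      have hmid : eVariationOn g (Set.Icc (0:ℝ) 1 ∩ Set.Icc a b)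
          ≤ (‖f a‖₊ : ℝ≥0∞) + (‖f b‖₊ : ℝ≥0∞) := by
        rw [hmidset]
        have h0 : ∀ x ∈ Set.Ioo a b, g x = 0 := fun x hx =>
          Set.indicator_of_notMem (fun h => h.2 hx) f
        have := middle_var g a b hcd h0
        have hga : g a = f a := Set.indicator_of_mem haX f
        have hgb : g b = f b := Set.indicator_of_mem hbX f
        rwa [hga, hgb] at this
      -- endpoint value bounds
      have hfa := nnnorm_le_var_add_l1 f ha
      have hfb := nnnorm_le_var_add_l1 f hb
      -- put the pieces together
      have hEg : bvVar g = eVariationOn g (Set.Icc (0:ℝ) 1 ∩ Set.Icc 0 a)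
          + (eVariationOn g (Set.Icc (0:ℝ) 1 ∩ Set.Icc a b)
            + eVariationOn g (Set.Icc (0:ℝ) 1 ∩ Set.Icc b 1)) := by
        unfold bvVar
        rw [← splitg1, ← splitg2]
      have hEf : bvVar f = eVariationOn f (Set.Icc (0:ℝ) 1 ∩ Set.Icc 0 a)
          + (eVariationOn f (Set.Icc (0:ℝ) 1 ∩ Set.Icc a b)
            + eVariationOn f (Set.Icc (0:ℝ) 1 ∩ Set.Icc b 1)) := by
        unfold bvVar
        rw [← splitf1, ← splitf2]
      have houter : eVariationOn f (Set.Icc (0:ℝ) 1 ∩ Set.Icc 0 a)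
          + eVariationOn f (Set.Icc (0:ℝ) 1 ∩ Set.Icc b 1) ≤ bvVar f := by
        rw [hEf]
        rw [← add_assoc]
        exact add_le_add le_self_add le_rfl
      have step1 : bvVar g ≤ eVariationOn f (Set.Icc (0:ℝ) 1 ∩ Set.Icc 0 a)
          + eVariationOn f (Set.Icc (0:ℝ) 1 ∩ Set.Icc b 1)
          + ((‖f a‖₊ : ℝ≥0∞) + (‖f b‖₊ : ℝ≥0∞)) := by
        rw [hEg, hleft, hright]
        have : eVariationOn f (Set.Icc (0:ℝ) 1 ∩ Set.Icc 0 a)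
            + (eVariationOn g (Set.Icc (0:ℝ) 1 ∩ Set.Icc a b)
              + eVariationOn f (Set.Icc (0:ℝ) 1 ∩ Set.Icc b 1))
            ≤ eVariationOn f (Set.Icc (0:ℝ) 1 ∩ Set.Icc 0 a)
            + (((‖f a‖₊ : ℝ≥0∞) + (‖f b‖₊ : ℝ≥0∞))
              + eVariationOn f (Set.Icc (0:ℝ) 1 ∩ Set.Icc b 1)) :=
          add_le_add le_rfl (add_le_add hmid le_rfl)
        refine this.trans (le_of_eq ?_)
        ring
      refine step1.trans ?_
      have step2 : eVariationOn f (Set.Icc (0:ℝ) 1 ∩ Set.Icc 0 a)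
          + eVariationOn f (Set.Icc (0:ℝ) 1 ∩ Set.Icc b 1)
          + ((‖f a‖₊ : ℝ≥0∞) + (‖f b‖₊ : ℝ≥0∞))
          ≤ bvVar f + ((bvVar f + l1Norm f) + (bvVar f + l1Norm f)) :=
        add_le_add houter (add_le_add hfa hfb)
      refine step2.trans (le_of_eq ?_)
      ring
    · -- empty hole: g = f on [0,1]
      have hIoo : Set.Ioo a b = ∅ := Set.Ioo_eq_empty hcd
      have heq : bvVar g = bvVar f := by
        apply eVariationOn.eq_of_eqOn
        intro x hx
        have hx' : x ∈ Set.Icc (0:ℝ) 1 \ Set.Ioo a b :=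
          ⟨hx, by rw [hIoo]; exact notMem_empty x⟩
        exact Set.indicator_of_mem hx' f
      rw [heq]
      calc bvVar f = 1 * bvVar f + 0 := by ring
        _ ≤ 3 * bvVar f + 2 * l1Norm f := by
            exact add_le_add (mul_le_mul' (by norm_num) le_rfl) zero_le
  -- put everything together
  calc bvVar (P g)
      ≤ ENNReal.ofReal α₀ * bvVar g + ENNReal.ofReal B₀ * l1Norm g := hLY g
    _ ≤ ENNReal.ofReal α₀ * (3 * bvVar f + 2 * l1Norm f) + ENNReal.ofReal B₀ * l1Norm f := by
        exact add_le_add (mul_le_mul' le_rfl hvarg) (mul_le_mul' le_rfl hl1g)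
    _ = ENNReal.ofReal (3 * α₀) * bvVar f + ENNReal.ofReal (2 * α₀ + B₀) * l1Norm f := by
        rw [ENNReal.ofReal_mul (by norm_num : (0:ℝ) ≤ 3),
          ENNReal.ofReal_add (by positivity) hB₀,
          ENNReal.ofReal_mul (by norm_num : (0:ℝ) ≤ 2)]
        have h3 : ENNReal.ofReal (3:ℝ) = 3 := by norm_num
        have h2 : ENNReal.ofReal (2:ℝ) = 2 := by norm_num
        rw [h3, h2]
        ring
end

section
/- Suppose P preserves Lebesgue integrals (∫ Pf dλ = ∫ f dλ for all f ∈ L¹), P_H f = P(f·χ_{[0,1]\H}), and P_H f*_H = e_H f*_H with f*_H ≥ 0, ∫ f*_H dλ = 1, and ‖f*_H‖_{BV} ≤ M. Then 1 − e_H ≤ M·λ(H). -/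
open MeasureTheory Set ENNReal

/-- if `P` preserves Lebesgue integrals, `P_H f = P(f·χ_{[0,1]\H})`, and
`P_H f*_H = e_H f*_H` with `f*_H ≥ 0`, `∫ f*_H dλ = 1` and `‖f*_H‖_BV ≤ M`, then
`1 − e_H ≤ M · λ(H)`. -/
theorem escape_rate_upper_bound
    (P : (ℝ → ℝ) →ₗ[ℝ] (ℝ → ℝ))
    (hint : ∀ g : ℝ → ℝ, ∫ x in Set.Icc (0:ℝ) 1, P g x = ∫ x in Set.Icc (0:ℝ) 1, g x)
    (a b : ℝ) (hab : Set.Ioo a b ⊆ Set.Icc 0 1)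
    (fH : ℝ → ℝ) (eH M : ℝ) (heH0 : 0 < eH) (heH1 : eH ≤ 1)
    (hpos : ∀ x, 0 ≤ fH x) (hnorm : ∫ x in Set.Icc (0:ℝ) 1, fH x = 1)
    (heig : P ((Set.Icc (0:ℝ) 1 \ Set.Ioo a b).indicator fH) = fun x => eH * fH x)
    (hM : bvVar fH + l1Norm fH ≤ ENNReal.ofReal M) :
    1 - eH ≤ M * (volume (Set.Ioo a b)).toReal := by
  -- fH is integrable on [0,1]
  have hInt : IntegrableOn fH (Set.Icc (0:ℝ) 1) := by
    by_contra h
    rw [integral_undef h] at hnorm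
    norm_num at hnorm
  -- variation is finite
  have hVfin : bvVar fH ≠ ⊤ :=
    ne_top_of_le_ne_top ofReal_ne_top (le_trans le_self_add hM)
  set V : ℝ := (bvVar fH).toReal with hV
  have hV0 : 0 ≤ V := ENNReal.toReal_nonneg
  -- l1Norm = 1
  have hl1 : l1Norm fH = ENNReal.ofReal 1 := by
    have hcoe : ∀ x, (‖fH x‖₊ : ℝ≥0∞) = ENNReal.ofReal (fH x) := fun x => by
      rw [← enorm_eq_nnnorm, ← ofReal_norm, Real.norm_of_nonneg (hpos x)]
    rw [l1Norm]
    simp_rw [hcoe]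
    rw [← ofReal_integral_eq_lintegral_ofReal hInt
      (Filter.Eventually.of_forall hpos), hnorm]
  -- V + 1 ≤ M
  have hVM : V + 1 ≤ M := by
    have h1 : ENNReal.ofReal (V + 1) ≤ ENNReal.ofReal M := by
      rw [ENNReal.ofReal_add hV0 zero_le_one, hV, ENNReal.ofReal_toReal hVfin]
      rw [hl1] at hM
      exact hM
    have hM0 : (0:ℝ) ≤ M := by
      by_contra h
      push_neg at h
      rw [ENNReal.ofReal_eq_zero.2 h.le, nonpos_iff_eq_zero, ENNReal.ofReal_eq_zero] at h1
      linarith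
    exact (ENNReal.ofReal_le_ofReal_iff hM0).1 h1
  -- pointwise bound fH x ≤ fH y + V on [0,1]
  have hptwise : ∀ x ∈ Set.Icc (0:ℝ) 1, ∀ y ∈ Set.Icc (0:ℝ) 1, fH x ≤ fH y + V := by
    intro x hx y hy
    have h := eVariationOn.edist_le fH hx hy
    rw [edist_dist] at h
    have hd : dist (fH x) (fH y) ≤ V :=
      (ENNReal.ofReal_le_iff_le_toReal hVfin).1 h
    rw [Real.dist_eq] at hd
    have := le_trans (le_abs_self (fH x - fH y)) hd
    linarith
  -- fH x ≤ 1 + V for x ∈ [0,1]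
  have hbound : ∀ x ∈ Set.Icc (0:ℝ) 1, fH x ≤ 1 + V := by
    intro x hx
    have hvol : (volume (Set.Icc (0:ℝ) 1)).toReal = 1 := by
      simp [Real.volume_Icc]
    have hc : ∫ y in Set.Icc (0:ℝ) 1, fH x = fH x := by
      rw [setIntegral_const, measureReal_def, hvol, one_smul]
    have hmono : ∫ y in Set.Icc (0:ℝ) 1, fH x ≤ ∫ y in Set.Icc (0:ℝ) 1, (fH y + V) := by
      apply setIntegral_mono_on (integrableOn_const (by simp [Real.volume_Icc]))
        (hInt.add (integrableOn_const (by simp [Real.volume_Icc])))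
        measurableSet_Icc
      intro y hy
      exact hptwise x hx y hy
    rw [hc] at hmono
    rw [integral_add hInt (integrableOn_const (by simp [Real.volume_Icc])),
      hnorm, setIntegral_const, measureReal_def, hvol, one_smul] at hmono
    linarith
  -- integrate the eigen equation
  have hIntdiff : IntegrableOn fH (Set.Icc (0:ℝ) 1 \ Set.Ioo a b) :=
    hInt.mono_set diff_subset
  have hIntIoo : IntegrableOn fH (Set.Ioo a b) := hInt.mono_set hab
  have hms : MeasurableSet (Set.Icc (0:ℝ) 1 \ Set.Ioo a b) :=
    measurableSet_Icc.diff measurableSet_Ioo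
  have heq : ∫ x in Set.Icc (0:ℝ) 1 \ Set.Ioo a b, fH x = eH := by
    have h1 := hint ((Set.Icc (0:ℝ) 1 \ Set.Ioo a b).indicator fH)
    rw [heig] at h1
    rw [setIntegral_indicator hms] at h1
    have h2 : Set.Icc (0:ℝ) 1 ∩ (Set.Icc (0:ℝ) 1 \ Set.Ioo a b)
        = Set.Icc (0:ℝ) 1 \ Set.Ioo a b := inter_eq_self_of_subset_right diff_subset
    rw [h2] at h1
    rw [← h1, integral_const_mul, hnorm, mul_one]
  have hsplit : ∫ x in (Set.Icc (0:ℝ) 1 \ Set.Ioo a b) ∪ Set.Ioo a b, fH x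
      = (∫ x in Set.Icc (0:ℝ) 1 \ Set.Ioo a b, fH x) + ∫ x in Set.Ioo a b, fH x :=
    setIntegral_union disjoint_sdiff_left measurableSet_Ioo hIntdiff hIntIoo
  rw [Set.diff_union_of_subset hab, hnorm, heq] at hsplit
  have hkey : 1 - eH = ∫ x in Set.Ioo a b, fH x := by linarith
  -- bound the integral over Ioo
  have hIoobound : ∫ x in Set.Ioo a b, fH x ≤ (1 + V) * (volume (Set.Ioo a b)).toReal := by
    have : ∫ x in Set.Ioo a b, fH x ≤ ∫ x in Set.Ioo a b, (1 + V) := by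
      apply setIntegral_mono_on hIntIoo
        (integrableOn_const (by rw [Real.volume_Ioo]; exact ofReal_ne_top))
        measurableSet_Ioo
      intro x hx
      exact hbound x (hab hx)
    rwa [setIntegral_const, measureReal_def, smul_eq_mul, mul_comm] at this
  have hvol0 : (0:ℝ) ≤ (volume (Set.Ioo a b)).toReal := ENNReal.toReal_nonneg
  rw [hkey]
  calc ∫ x in Set.Ioo a b, fH x ≤ (1 + V) * (volume (Set.Ioo a b)).toReal := hIoobound
    _ ≤ M * (volume (Set.Ioo a b)).toReal := by
        apply mul_le_mul_of_nonneg_right _ hvol0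
        linarith
end

section
/- Combining the previous two results: if P_H f*_H = e_H f*_H with e_H ≥ 1 − ℓ > α = 3α₀, f*_H ≥ 0 a probability density, then 1 − e_H ≤ (1 + (2α₀ + B₀)/(1 − ℓ − α))·λ(H). -/
open MeasureTheory Set ENNReal

lemma evar_add_le (f g : ℝ → ℝ) (s : Set ℝ) :
    eVariationOn (fun x => f x + g x) s ≤ eVariationOn f s + eVariationOn g s := by
  apply iSup_le
  rintro ⟨n, u, hu, us⟩
  calc ∑ i ∈ Finset.range n, edist (f (u (i+1)) + g (u (i+1))) (f (u i) + g (u i))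
      ≤ ∑ i ∈ Finset.range n, (edist (f (u (i+1))) (f (u i)) + edist (g (u (i+1))) (g (u i))) := by
        refine Finset.sum_le_sum fun i _ => ?_
        rw [edist_dist, edist_dist, edist_dist, ← ENNReal.ofReal_add dist_nonneg dist_nonneg]
        exact ENNReal.ofReal_le_ofReal (dist_add_add_le _ _ _ _)
    _ = _ := Finset.sum_add_distrib
    _ ≤ _ := add_le_add (eVariationOn.sum_le (f := f) hu us) (eVariationOn.sum_le (f := g) hu us)

lemma evar_neg (f : ℝ → ℝ) (s : Set ℝ) :
    eVariationOn (fun x => -f x) s = eVariationOn f s := by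
  simp only [eVariationOn, edist_neg_neg]

lemma evar_const_mul (c : ℝ) (f : ℝ → ℝ) (s : Set ℝ) :
    eVariationOn (fun x => c * f x) s = (‖c‖₊ : ℝ≥0∞) * eVariationOn f s := by
  simp only [eVariationOn, ENNReal.mul_iSup]
  congr 1
  ext p
  rw [Finset.mul_sum]
  refine Finset.sum_congr rfl fun i _ => ?_
  rw [← smul_eq_mul, ← smul_eq_mul, edist_smul₀]
  simp [ENNReal.smul_def]

/-- if `P` is a Perron–Frobenius-type operator satisfying a Lasota–Yorke
inequality with `α₀ < 1/3`, `P_H f = P(f·χ_{[0,1]\H})`, and `P_H f*_H = e_H f*_H` with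
`f*_H ≥ 0` a probability density and `e_H ≥ 1 − ℓ > α = 3α₀`, then
`1 − e_H ≤ (1 + (2α₀+B₀)/(1 − ℓ − α)) · λ(H)`. -/
theorem escape_rate_explicit_bound
    (P : (ℝ → ℝ) →ₗ[ℝ] (ℝ → ℝ)) (α₀ B₀ ℓ : ℝ)
    (hα₀ : 0 < α₀) (hα₁ : α₀ < 1/3) (hB₀ : 0 ≤ B₀)
    (hLY : ∀ f, bvVar (P f) ≤ ENNReal.ofReal α₀ * bvVar f + ENNReal.ofReal B₀ * l1Norm f)
    (hL1 : ∀ g, l1Norm (P g) ≤ l1Norm g)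
    (hint : ∀ g : ℝ → ℝ, ∫ x in Set.Icc (0:ℝ) 1, P g x = ∫ x in Set.Icc (0:ℝ) 1, g x)
    (a b : ℝ) (hab : Set.Ioo a b ⊆ Set.Icc 0 1)
    (fH : ℝ → ℝ) (eH : ℝ)
    (hℓ0 : 0 < ℓ) (hℓ : ℓ < 1 - 3 * α₀)
    (hpos : ∀ x, 0 ≤ fH x) (hbv : BoundedVariationOn fH (Set.Icc 0 1))
    (hnorm : ∫ x in Set.Icc (0:ℝ) 1, fH x = 1)
    (heig : P ((Set.Icc (0:ℝ) 1 \ Set.Ioo a b).indicator fH) = fun x => eH * fH x)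
    (heH : 1 - ℓ ≤ eH) :
    1 - eH ≤ (1 + (2 * α₀ + B₀) / (1 - ℓ - 3 * α₀)) * (volume (Set.Ioo a b)).toReal := by
  set s : Set ℝ := Set.Icc 0 1 with hs
  set g : ℝ → ℝ := (s \ Set.Ioo a b).indicator fH with hg
  set V : ℝ := (eVariationOn fH s).toReal with hV
  have hVfin : eVariationOn fH s ≠ ⊤ := hbv
  have hV0 : 0 ≤ V := ENNReal.toReal_nonneg
  have heH0 : (0:ℝ) ≤ eH := by linarith
  have hvols : volume s = 1 := by simp [hs, Real.volume_Icc]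
  -- integrability of fH on s
  have hintg : IntegrableOn fH s volume := by
    obtain ⟨p, q, hp, hq, hpq⟩ :=
      LocallyBoundedVariationOn.exists_monotoneOn_sub_monotoneOn
        hbv.locallyBoundedVariationOn
    rw [hpq]
    exact (hp.integrableOn_isCompact isCompact_Icc).sub (hq.integrableOn_isCompact isCompact_Icc)
  -- sup bound: fH ≤ 1 + V on s
  have hsup : ∀ x ∈ s, fH x ≤ 1 + V := by
    intro x hx
    have key : ∀ y ∈ s, fH x ≤ fH y + V := by
      intro y hy
      have h1 : edist (fH x) (fH y) ≤ eVariationOn fH s := eVariationOn.edist_le fH hx hy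
      have h2 : dist (fH x) (fH y) ≤ V := by
        rw [edist_dist] at h1
        have := ENNReal.toReal_mono hVfin h1
        rwa [ENNReal.toReal_ofReal dist_nonneg] at this
      rw [Real.dist_eq] at h2
      have := le_abs_self (fH x - fH y)
      linarith
    have e1 : fH x = ∫ _ in s, fH x := by
      rw [setIntegral_const, measureReal_def, hvols]; simp
    have e2 : (∫ _ in s, fH x) ≤ ∫ y in s, (fH y + V) := by
      refine setIntegral_mono_on (integrableOn_const ?_)
        (hintg.add (integrableOn_const ?_)) measurableSet_Icc key
      · rw [hvols]; exact one_ne_top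
      · rw [hvols]; exact one_ne_top
    have e3 : (∫ y in s, (fH y + V)) = 1 + V := by
      rw [integral_add hintg (integrableOn_const (by rw [hvols]; exact one_ne_top)),
        hnorm, setIntegral_const, measureReal_def, hvols]
      simp
    linarith [e1.trans_le (e2.trans_eq e3)]
  -- l1 norm facts
  have hl1fH : (∫⁻ x in s, (‖fH x‖₊ : ℝ≥0∞)) = ENNReal.ofReal 1 := by
    have hc : (∫⁻ x in s, (‖fH x‖₊ : ℝ≥0∞)) = ∫⁻ x in s, ENNReal.ofReal (fH x) :=
      lintegral_congr fun x => Real.enorm_eq_ofReal (hpos x)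
    rw [hc, ← MeasureTheory.ofReal_integral_eq_lintegral_ofReal hintg
      (ae_of_all _ fun y => hpos y), hnorm]
  have hl1g : l1Norm g ≤ ENNReal.ofReal 1 := by
    rw [show l1Norm g = ∫⁻ x in s, (‖g x‖₊ : ℝ≥0∞) from rfl, ← hl1fH]
    refine lintegral_mono fun x => ?_
    simp only [hg]
    by_cases hx : x ∈ s \ Set.Ioo a b
    · rw [Set.indicator_of_mem hx]
    · rw [Set.indicator_of_notMem hx]; simp
  -- variation bound on g
  have hgvar : eVariationOn g s ≤ eVariationOn fH s
      + ENNReal.ofReal (1 + V) + ENNReal.ofReal (1 + V) := by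
    rcases le_or_gt b a with hba | hba
    · have hIoo : Set.Ioo a b = ∅ := Set.Ioo_eq_empty (not_lt.2 hba)
      have heqOn : EqOn g fH s := by
        intro x hx
        rw [hg, hIoo, Set.diff_empty, Set.indicator_of_mem hx]
      rw [eVariationOn.eq_of_eqOn heqOn]
      exact le_add_right (le_add_right le_rfl)
    · -- a < b, hence 0 ≤ a and b ≤ 1
      have ha0 : 0 ≤ a := by
        by_contra h
        push_neg at h
        obtain ⟨x, hx1, hx2⟩ := exists_between (lt_min hba h)
        have hxs := hab ⟨hx1, hx2.trans_le (min_le_left _ _)⟩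
        exact absurd hxs.1 (not_le.2 (hx2.trans_le (min_le_right _ _)))
      have hb1 : b ≤ 1 := by
        by_contra h
        push_neg at h
        obtain ⟨x, hx1, hx2⟩ := exists_between (max_lt hba h)
        have hxs := hab ⟨(le_max_left _ _).trans_lt hx1, hx2⟩
        exact absurd hxs.2 (not_le.2 ((le_max_right _ _).trans_lt hx1))
      have ha1 : a ≤ 1 := (hba.le).trans hb1
      have hb0 : 0 ≤ b := ha0.trans hba.le
      have hamem : a ∈ s := ⟨ha0, ha1⟩
      have hbmem : b ∈ s := ⟨hb0, hb1⟩
      have es : s ∩ Set.Icc 0 1 = s := by rw [hs]; exact Set.inter_self _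
      have es0a : s ∩ Set.Icc 0 a = Set.Icc 0 a :=
        Set.inter_eq_self_of_subset_right (Set.Icc_subset_Icc le_rfl ha1)
      have esab : s ∩ Set.Icc a b = Set.Icc a b :=
        Set.inter_eq_self_of_subset_right (Set.Icc_subset_Icc ha0 hb1)
      have esb1 : s ∩ Set.Icc b 1 = Set.Icc b 1 :=
        Set.inter_eq_self_of_subset_right (Set.Icc_subset_Icc hb0 le_rfl)
      have e1 := eVariationOn.Icc_add_Icc g (c := 1) ha0 ha1 hamem
      have e2 := eVariationOn.Icc_add_Icc g (a := a) hba.le hb1 hbmem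
      rw [es, es0a] at e1
      rw [esab, esb1] at e2
      -- g = fH on the outer pieces
      have eq0a : eVariationOn g (Set.Icc 0 a) = eVariationOn fH (Set.Icc 0 a) := by
        refine eVariationOn.eq_of_eqOn fun x hx => ?_
        have hxmem : x ∈ s \ Set.Ioo a b :=
          ⟨⟨hx.1, hx.2.trans ha1⟩, fun hm => absurd hx.2 (not_le.2 hm.1)⟩
        exact Set.indicator_of_mem hxmem fH
      have eqb1 : eVariationOn g (Set.Icc b 1) = eVariationOn fH (Set.Icc b 1) := by
        refine eVariationOn.eq_of_eqOn fun x hx => ?_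
        have hxmem : x ∈ s \ Set.Ioo a b :=
          ⟨⟨hb0.trans hx.1, hx.2⟩, fun hm => absurd hx.1 (not_le.2 hm.2)⟩
        exact Set.indicator_of_mem hxmem fH
      -- middle piece
      have hmid : eVariationOn g (Set.Icc a b)
          ≤ ENNReal.ofReal (fH a) + ENNReal.ofReal (fH b) := by
        set h1 : ℝ → ℝ := fun x => if x ≤ a then fH a else 0 with hh1
        set h2 : ℝ → ℝ := fun x => if b ≤ x then fH b else 0 with hh2
        have heqn : EqOn g (fun x => h1 x + h2 x) (Set.Icc a b) := by
          intro x hx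
          rcases eq_or_lt_of_le hx.1 with h | h
          · simp only [hg, hh1, hh2, ← h]
            have hamem' : a ∈ s \ Set.Ioo a b := ⟨hamem, fun hm => lt_irrefl a hm.1⟩
            rw [Set.indicator_of_mem hamem', if_pos le_rfl, if_neg (not_le.2 hba)]
            ring
          · rcases eq_or_lt_of_le hx.2 with h' | h'
            · simp only [hg, hh1, hh2, h']
              have hbmem' : b ∈ s \ Set.Ioo a b := ⟨hbmem, fun hm => lt_irrefl b hm.2⟩
              rw [Set.indicator_of_mem hbmem', if_neg (not_le.2 hba), if_pos le_rfl]
              ring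
            · simp only [hg, hh1, hh2]
              rw [Set.indicator_of_notMem (fun hm => hm.2 ⟨h, h'⟩),
                if_neg (not_le.2 h), if_neg (not_le.2 h')]
              ring
        rw [eVariationOn.eq_of_eqOn heqn]
        refine (evar_add_le h1 h2 (Set.Icc a b)).trans (add_le_add ?_ ?_)
        · have hanti : Antitone h1 := by
            intro x y hxy
            simp only [hh1]
            by_cases hy : y ≤ a
            · rw [if_pos hy, if_pos (hxy.trans hy)]
            · rw [if_neg hy]
              by_cases hx' : x ≤ a
              · rw [if_pos hx']; exact hpos a
              · rw [if_neg hx']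
          have hm : Monotone (fun x => -h1 x) := fun x y hxy => neg_le_neg (hanti hxy)
          have hble := (hm.monotoneOn (Set.Icc a b)).eVariationOn_le
            (Set.left_mem_Icc.2 hba.le) (Set.right_mem_Icc.2 hba.le)
          rw [Set.inter_self] at hble
          calc eVariationOn h1 (Set.Icc a b)
              = eVariationOn (fun x => -h1 x) (Set.Icc a b) := (evar_neg _ _).symm
            _ ≤ ENNReal.ofReal (-h1 b - -h1 a) := hble
            _ = ENNReal.ofReal (fH a) := by
                simp only [hh1, if_pos (le_refl a), if_neg (not_le.2 hba)]
                norm_num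
        · have hmono : Monotone h2 := by
            intro x y hxy
            simp only [hh2]
            by_cases hx' : b ≤ x
            · rw [if_pos hx', if_pos (hx'.trans hxy)]
            · rw [if_neg hx']
              by_cases hy : b ≤ y
              · rw [if_pos hy]; exact hpos b
              · rw [if_neg hy]
          have hble := (hmono.monotoneOn (Set.Icc a b)).eVariationOn_le
            (Set.left_mem_Icc.2 hba.le) (Set.right_mem_Icc.2 hba.le)
          rw [Set.inter_self] at hble
          refine hble.trans (le_of_eq ?_)
          simp only [hh2, if_pos (le_refl b), if_neg (not_le.2 hba)]
          norm_num
      -- outer pieces sum at most total variation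
      have hsplit : eVariationOn fH (Set.Icc 0 a) + eVariationOn fH (Set.Icc b 1)
          ≤ eVariationOn fH s := by
        have f1 := eVariationOn.Icc_add_Icc fH (a := (0:ℝ)) (c := 1) hb0 hb1 hbmem
        rw [es, esb1] at f1
        have f2 : eVariationOn fH (Set.Icc 0 a) ≤ eVariationOn fH (s ∩ Set.Icc 0 b) :=
          eVariationOn.mono fH fun x hx =>
            ⟨⟨hx.1, hx.2.trans ha1⟩, hx.1, hx.2.trans hba.le⟩
        calc eVariationOn fH (Set.Icc 0 a) + eVariationOn fH (Set.Icc b 1)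
            ≤ eVariationOn fH (s ∩ Set.Icc 0 b) + eVariationOn fH (Set.Icc b 1) :=
              add_le_add f2 le_rfl
          _ = eVariationOn fH s := f1
      calc eVariationOn g s
          = eVariationOn g (Set.Icc 0 a) + (eVariationOn g (Set.Icc a b)
            + eVariationOn g (Set.Icc b 1)) := by rw [← e1, ← e2]
        _ = eVariationOn fH (Set.Icc 0 a) + (eVariationOn g (Set.Icc a b)
            + eVariationOn fH (Set.Icc b 1)) := by rw [eq0a, eqb1]
        _ ≤ eVariationOn fH (Set.Icc 0 a) + ((ENNReal.ofReal (fH a) + ENNReal.ofReal (fH b))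
            + eVariationOn fH (Set.Icc b 1)) := add_le_add le_rfl (add_le_add hmid le_rfl)
        _ = (eVariationOn fH (Set.Icc 0 a) + eVariationOn fH (Set.Icc b 1))
            + (ENNReal.ofReal (fH a) + ENNReal.ofReal (fH b)) := by ring
        _ ≤ eVariationOn fH s + (ENNReal.ofReal (1 + V) + ENNReal.ofReal (1 + V)) :=
            add_le_add hsplit (add_le_add (ENNReal.ofReal_le_ofReal (hsup a hamem))
              (ENNReal.ofReal_le_ofReal (hsup b hbmem)))
        _ = _ := by ring
  -- key identity: 1 - eH = ∫ fH over Ioo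
  have hkey : 1 - eH = ∫ x in Set.Ioo a b, fH x := by
    have h1 := hint g
    rw [heig] at h1
    have h2 : (∫ x in s, eH * fH x) = eH := by
      rw [MeasureTheory.integral_const_mul, hnorm, mul_one]
    have h3 : (∫ x in s, g x) = 1 - ∫ x in Set.Ioo a b, fH x := by
      rw [hg, setIntegral_indicator (measurableSet_Icc.diff measurableSet_Ioo),
        Set.inter_eq_self_of_subset_right Set.diff_subset,
        integral_diff measurableSet_Ioo hintg hab, hnorm]
    rw [h2, h3] at h1
    linarith
  -- Lasota–Yorke chain
  have hVr : eVariationOn fH s = ENNReal.ofReal V := (ENNReal.ofReal_toReal hVfin).symm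
  have hPg : bvVar (P g) = ENNReal.ofReal eH * eVariationOn fH s := by
    rw [heig, bvVar, evar_const_mul, show ((‖eH‖₊ : ℝ≥0∞)) = ENNReal.ofReal eH from Real.enorm_eq_ofReal heH0]
  have hLY2 : ENNReal.ofReal (eH * V)
      ≤ ENNReal.ofReal (α₀ * (V + (1 + V) + (1 + V)) + B₀ * 1) := by
    rw [ENNReal.ofReal_mul heH0]
    calc ENNReal.ofReal eH * ENNReal.ofReal V = bvVar (P g) := by rw [hPg, hVr]
      _ ≤ ENNReal.ofReal α₀ * bvVar g + ENNReal.ofReal B₀ * l1Norm g := hLY g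
      _ ≤ ENNReal.ofReal α₀ * (ENNReal.ofReal V + ENNReal.ofReal (1 + V)
          + ENNReal.ofReal (1 + V)) + ENNReal.ofReal B₀ * ENNReal.ofReal 1 := by
          refine add_le_add (mul_le_mul_right ?_ _) (mul_le_mul_right hl1g _)
          rw [show bvVar g = eVariationOn g s from rfl, ← hVr]
          exact hgvar
      _ = ENNReal.ofReal (α₀ * (V + (1 + V) + (1 + V)) + B₀ * 1) := by
          rw [← ENNReal.ofReal_add hV0 (by positivity : (0:ℝ) ≤ 1 + V),
            ← ENNReal.ofReal_add (by positivity : (0:ℝ) ≤ V + (1 + V))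
              (by positivity : (0:ℝ) ≤ 1 + V),
            ← ENNReal.ofReal_mul hα₀.le, ← ENNReal.ofReal_mul hB₀,
            ← ENNReal.ofReal_add (by positivity) (by positivity)]
  have hreal : eH * V ≤ α₀ * (V + (1 + V) + (1 + V)) + B₀ * 1 :=
    (ENNReal.ofReal_le_ofReal_iff (by positivity)).1 hLY2
  have hden : (0:ℝ) < 1 - ℓ - 3 * α₀ := by linarith
  have hVC : V ≤ (2 * α₀ + B₀) / (1 - ℓ - 3 * α₀) := by
    rw [le_div_iff₀ hden]
    have h1 : (1 - ℓ) * V ≤ eH * V := mul_le_mul_of_nonneg_right heH hV0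
    nlinarith [h1, hreal]
  have hvol0 : (0:ℝ) ≤ (volume (Set.Ioo a b)).toReal := ENNReal.toReal_nonneg
  have hIle : (∫ x in Set.Ioo a b, fH x) ≤ (1 + V) * (volume (Set.Ioo a b)).toReal := by
    have hi : IntegrableOn fH (Set.Ioo a b) volume := hintg.mono_set hab
    have hvolI : volume (Set.Ioo a b) < ⊤ :=
      lt_of_le_of_lt (measure_mono hab) (by rw [show volume (Set.Icc (0:ℝ) 1) = 1 from hvols]; exact one_lt_top)
    calc (∫ x in Set.Ioo a b, fH x) ≤ ∫ _x in Set.Ioo a b, (1 + V) :=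
        setIntegral_mono_on hi (integrableOn_const hvolI.ne) measurableSet_Ioo
          (fun x hx => hsup x (hab hx))
      _ = (1 + V) * (volume (Set.Ioo a b)).toReal := by
          rw [setIntegral_const, smul_eq_mul, mul_comm, measureReal_def]
  rw [hkey]
  refine hIle.trans ?_
  exact mul_le_mul_of_nonneg_right (by linarith) hvol0
end

section
/- For the map T on [0,1] given by T(x) = 9x/(1−x) for 0 ≤ x ≤ 1/10 and T(x) = 10x − i for i/10 < x ≤ (i+1)/10 (i = 1,...,9), the associated Perron–Frobenius operator P satisfies V(Pf) ≤ (1/9)·V(f) + (2/9)·‖f‖₁ for all f ∈ BV([0,1]). -/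
open MeasureTheory Set ENNReal

/-- The map `T(x) = 9x/(1-x)` on `[0,1/10]` and `T(x) = 10x - i` on `(i/10,(i+1)/10]`,
`i = 1,…,9`. -/
noncomputable def T16 : ℝ → ℝ :=
  fun x => if x ≤ 1/10 then 9 * x / (1 - x) else 10 * x - (⌈10 * x⌉ - 1)

/-- The Perron–Frobenius operator of `T16`:
`Pf(x) = Σ_{y : Ty = x} f(y)/|T'(y)|`, computed on the inverse branches:
`y = x/(9+x)` with `1/|T'(y)| = 9/(9+x)²`, and `y = (x+i)/10` with `1/|T'(y)| = 1/10`. -/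
noncomputable def P16 (f : ℝ → ℝ) : ℝ → ℝ :=
  fun x => 9 / (9 + x) ^ 2 * f (x / (9 + x))
    + ∑ i ∈ (Finset.Icc 1 9 : Finset ℕ), (1 / 10 : ℝ) * f ((x + (i : ℝ)) / 10)


lemma evar_sum_le {ι : Type*} (S : Finset ι) (F : ι → ℝ → ℝ) (s : Set ℝ) :
    eVariationOn (fun x => ∑ i ∈ S, F i x) s ≤ ∑ i ∈ S, eVariationOn (F i) s := by
  classical
  induction S using Finset.induction with
  | empty =>
      simp only [Finset.sum_empty]
      exact le_of_eq (eVariationOn.constant_on (fun x hx y hy => by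
        obtain ⟨a, -, rfl⟩ := hx; obtain ⟨b, -, rfl⟩ := hy; rfl))
  | insert a S' h ih =>
      simp only [Finset.sum_insert h]
      exact (evar_add_le _ _ s).trans (add_le_add_right ih _)

lemma evar_smul_le (c : ℝ) (f : ℝ → ℝ) (s : Set ℝ) :
    eVariationOn (fun x => c * f x) s ≤ ENNReal.ofReal |c| * eVariationOn f s := by
  apply iSup_le
  rintro ⟨n, u, hu, us⟩
  have key : ∀ a b : ℝ, edist (c * a) (c * b) = ENNReal.ofReal |c| * edist a b := by
    intro a b
    rw [edist_dist, edist_dist, Real.dist_eq, Real.dist_eq, ← mul_sub, abs_mul,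
      ENNReal.ofReal_mul (abs_nonneg c)]
  calc ∑ i ∈ Finset.range n, edist (c * f (u (i+1))) (c * f (u i))
      = ENNReal.ofReal |c| * ∑ i ∈ Finset.range n, edist (f (u (i+1))) (f (u i)) := by
        simp_rw [key]; rw [Finset.mul_sum]
    _ ≤ _ := mul_le_mul_right (eVariationOn.sum_le (f := f) (n := n) hu us) _


-- splitting lintegral over adjacent Icc
lemma lint_Icc_add_Icc (h : ℝ → ℝ≥0∞) {a b c : ℝ} (hab : a ≤ b) (hbc : b ≤ c) :
    (∫⁻ x in Icc a b, h x) + ∫⁻ x in Icc b c, h x = ∫⁻ x in Icc a c, h x := by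
  have h1 : (volume : Measure ℝ).restrict (Icc a b) = volume.restrict (Ico a b) :=
    (Measure.restrict_congr_set Ico_ae_eq_Icc).symm
  have hdisj : Disjoint (Ico a b) (Icc b c) := by
    apply Set.disjoint_left.2
    rintro x ⟨-, h2⟩ ⟨h3, -⟩; exact absurd h3 (not_le.2 h2)
  rw [h1, ← lintegral_add_measure, ← Measure.restrict_union hdisj measurableSet_Icc,
    Ico_union_Icc_eq_Icc hab hbc]

lemma lint_sum_le (h : ℝ → ℝ≥0∞) (u : ℕ → ℝ) (hu : Monotone u) (n : ℕ) :
    ∑ i ∈ Finset.range n, (∫⁻ x in Icc (u i) (u (i+1)), h x)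
      ≤ ∫⁻ x in Icc (u 0) (u n), h x := by
  induction n with
  | zero => simp
  | succ n ih =>
      rw [Finset.sum_range_succ]
      calc _ ≤ (∫⁻ x in Icc (u 0) (u n), h x) + ∫⁻ x in Icc (u n) (u (n+1)), h x :=
            add_le_add_left ih _
        _ = _ := lint_Icc_add_Icc h (hu (Nat.zero_le n)) (hu (Nat.le_succ n))

-- pairing sums
lemma sum_pair (E : ℕ → ℝ≥0∞) (n : ℕ) :
    ∑ i ∈ Finset.range n, (E (2*i) + E (2*i+1)) = ∑ j ∈ Finset.range (2*n), E j := by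
  induction n with
  | zero => simp
  | succ n ih =>
      rw [Finset.sum_range_succ, ih, Nat.mul_succ, show 2*n+2 = (2*n+1)+1 from rfl,
        Finset.sum_range_succ, Finset.sum_range_succ]
      ring

-- interleaving
lemma interleave_sum_le (f : ℝ → ℝ) (s : Set ℝ) (n : ℕ) (u t : ℕ → ℝ)
    (hu : Monotone u) (us : ∀ i, u i ∈ s) (hs : OrdConnected s)
    (ht : ∀ i, t i ∈ Icc (u i) (u (i+1))) :
    ∑ i ∈ Finset.range n,
        (edist (f (t i)) (f (u i)) + edist (f (u (i+1))) (f (t i)))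
      ≤ eVariationOn f s := by
  set v : ℕ → ℝ := fun k => if Even k then u (k/2) else t (k/2) with hv
  have hv2 : ∀ m, v (2*m) = u m := by
    intro m; simp only [hv]
    rw [if_pos ⟨m, by ring⟩]; congr 1; omega
  have hv21 : ∀ m, v (2*m+1) = t m := by
    intro m; simp only [hv]
    rw [if_neg (by simp [Nat.even_add_one, parity_simps])]; congr 1; omega
  have hmono : Monotone v := by
    apply monotone_nat_of_le_succ
    intro k
    rcases Nat.even_or_odd k with ⟨m, hm⟩ | ⟨m, hm⟩
    · subst hm
      rw [show m + m = 2*m by ring, hv2, show 2*m+1 = 2*m+1 from rfl, hv21]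
      exact (ht m).1
    · subst hm
      rw [show 2*m+1+1 = 2*(m+1) by ring, hv2, hv21]
      exact (ht m).2
  have hmem : ∀ k, v k ∈ s := by
    intro k
    rcases Nat.even_or_odd k with ⟨m, hm⟩ | ⟨m, hm⟩
    · subst hm; rw [show m + m = 2*m by ring, hv2]; exact us m
    · subst hm; rw [hv21]
      exact hs.out (us m) (us (m+1)) (ht m)
  calc ∑ i ∈ Finset.range n,
        (edist (f (t i)) (f (u i)) + edist (f (u (i+1))) (f (t i)))
      = ∑ i ∈ Finset.range n,
        (edist (f (v (2*i+1))) (f (v (2*i))) + edist (f (v (2*i+1+1))) (f (v (2*i+1)))) := by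
        apply Finset.sum_congr rfl; intro i _
        rw [hv2, hv21, show 2*i+1+1 = 2*(i+1) by ring, hv2]
    _ = ∑ j ∈ Finset.range (2*n), edist (f (v (j+1))) (f (v j)) := by
        rw [← sum_pair (fun j => edist (f (v (j+1))) (f (v j))) n]
    _ ≤ eVariationOn f s := eVariationOn.sum_le (f := f) (n := 2*n) hmono hmem


lemma per_interval (f : ℝ → ℝ) {a b : ℝ} (ha : a ∈ Icc (0:ℝ) (1/10))
    (hb : b ∈ Icc (0:ℝ) (1/10)) (hab : a ≤ b) (ε : ℝ≥0∞) (hε : 0 < ε) :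
    ∃ t ∈ Icc a b,
      edist ((1-b)^2/9 * f b) ((1-a)^2/9 * f a)
        ≤ ENNReal.ofReal (1/9) * (edist (f t) (f a) + edist (f b) (f t))
          + ENNReal.ofReal (2/9) * (∫⁻ x in Icc a b, (‖f x‖₊ : ℝ≥0∞))
          + ENNReal.ofReal (b - a) * ε := by
  obtain ⟨ha0, ha1⟩ := ha
  obtain ⟨hb0, hb1⟩ := hb
  set m : ℝ≥0∞ := ⨅ x : Icc a b, (‖f x.1‖₊ : ℝ≥0∞) with hm
  have hane : Nonempty (Icc a b) := ⟨⟨a, le_refl a, hab⟩⟩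
  have hmne : m ≠ ∞ :=
    ne_top_of_le_ne_top coe_ne_top (iInf_le (fun x : Icc a b => (‖f x.1‖₊ : ℝ≥0∞)) ⟨a, le_refl a, hab⟩)
  have hlt : m < m + ε := ENNReal.lt_add_right hmne hε.ne'
  obtain ⟨⟨t, htmem⟩, htlt⟩ : ∃ x : Icc a b, (‖f x.1‖₊ : ℝ≥0∞) < m + ε := by
    rwa [← iInf_lt_iff]
  refine ⟨t, htmem, ?_⟩
  obtain ⟨hta, htb⟩ := htmem
  -- the integral lower bound
  have hvol : m * ENNReal.ofReal (b - a) ≤ ∫⁻ x in Icc a b, (‖f x‖₊ : ℝ≥0∞) := by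
    calc m * ENNReal.ofReal (b - a) = m * volume (Icc a b) := by rw [Real.volume_Icc]
      _ = ∫⁻ _ in Icc a b, m := (setLIntegral_const _ _).symm
      _ ≤ ∫⁻ x in Icc a b, (‖f x‖₊ : ℝ≥0∞) := by
          apply lintegral_mono_ae
          rw [ae_restrict_iff' measurableSet_Icc]
          exact ae_of_all _ fun x hx =>
            iInf_le (fun x : Icc a b => (‖f x.1‖₊ : ℝ≥0∞)) ⟨x, hx⟩
  -- real-number estimate
  have hreal : |(1-b)^2/9 * f b - (1-a)^2/9 * f a|
      ≤ 1/9 * |f t - f a| + 1/9 * |f b - f t| + 2/9 * (b-a) * |f t| := by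
    have hid : (1-b)^2/9 * f b - (1-a)^2/9 * f a
        = (1-a)^2/9 * (f t - f a) + (1-b)^2/9 * (f b - f t)
          + ((1-b)^2/9 - (1-a)^2/9) * f t := by ring
    have h1 : |(1-a)^2/9 * (f t - f a)| ≤ 1/9 * |f t - f a| := by
      rw [abs_mul]
      apply mul_le_mul_of_nonneg_right _ (abs_nonneg _)
      rw [abs_of_nonneg (by positivity)]; nlinarith
    have h2 : |(1-b)^2/9 * (f b - f t)| ≤ 1/9 * |f b - f t| := by
      rw [abs_mul]
      apply mul_le_mul_of_nonneg_right _ (abs_nonneg _)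
      rw [abs_of_nonneg (by positivity)]; nlinarith
    have h3 : |((1-b)^2/9 - (1-a)^2/9) * f t| ≤ 2/9 * (b-a) * |f t| := by
      rw [abs_mul]
      apply mul_le_mul_of_nonneg_right _ (abs_nonneg _)
      rw [abs_of_nonpos (by nlinarith)]; nlinarith
    calc |(1-b)^2/9 * f b - (1-a)^2/9 * f a|
        = |(1-a)^2/9 * (f t - f a) + (1-b)^2/9 * (f b - f t)
            + ((1-b)^2/9 - (1-a)^2/9) * f t| := by rw [hid]
      _ ≤ |(1-a)^2/9 * (f t - f a) + (1-b)^2/9 * (f b - f t)|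
            + |((1-b)^2/9 - (1-a)^2/9) * f t| := abs_add_le _ _
      _ ≤ |(1-a)^2/9 * (f t - f a)| + |(1-b)^2/9 * (f b - f t)|
            + |((1-b)^2/9 - (1-a)^2/9) * f t| := by
          exact add_le_add_left (abs_add_le _ _) _
      _ ≤ _ := by linarith
  -- pass to ENNReal
  have hft : ENNReal.ofReal |f t| ≤ m + ε := by
    rw [← Real.norm_eq_abs, ofReal_norm]
    exact htlt.le
  calc edist ((1-b)^2/9 * f b) ((1-a)^2/9 * f a)
      = ENNReal.ofReal |(1-b)^2/9 * f b - (1-a)^2/9 * f a| := by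
        rw [edist_dist, Real.dist_eq]
    _ ≤ ENNReal.ofReal (1/9 * |f t - f a| + 1/9 * |f b - f t| + 2/9 * (b-a) * |f t|) :=
        ofReal_le_ofReal hreal
    _ = ENNReal.ofReal (1/9) * ENNReal.ofReal |f t - f a|
        + ENNReal.ofReal (1/9) * ENNReal.ofReal |f b - f t|
        + ENNReal.ofReal (2/9) * (ENNReal.ofReal (b-a) * ENNReal.ofReal |f t|) := by
        rw [ofReal_add (by positivity) (mul_nonneg (by nlinarith) (abs_nonneg _)),
          ofReal_add (by positivity) (by positivity),
          ofReal_mul (by norm_num), ofReal_mul (by norm_num),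
          show (2:ℝ)/9 * (b-a) * |f t| = 2/9 * ((b-a) * |f t|) by ring,
          ofReal_mul (by norm_num), ofReal_mul (by linarith)]
    _ ≤ ENNReal.ofReal (1/9) * ENNReal.ofReal |f t - f a|
        + ENNReal.ofReal (1/9) * ENNReal.ofReal |f b - f t|
        + ENNReal.ofReal (2/9) * ((∫⁻ x in Icc a b, (‖f x‖₊ : ℝ≥0∞)) + ENNReal.ofReal (b-a) * ε) := by
        apply add_le_add_right
        apply mul_le_mul_right
        calc ENNReal.ofReal (b-a) * ENNReal.ofReal |f t|
            ≤ ENNReal.ofReal (b-a) * (m + ε) := mul_le_mul_right hft _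
          _ = m * ENNReal.ofReal (b-a) + ENNReal.ofReal (b-a) * ε := by ring
          _ ≤ _ := add_le_add_left hvol _
    _ = ENNReal.ofReal (1/9) * (edist (f t) (f a) + edist (f b) (f t))
        + ENNReal.ofReal (2/9) * (∫⁻ x in Icc a b, (‖f x‖₊ : ℝ≥0∞))
        + ENNReal.ofReal (2/9) * (ENNReal.ofReal (b-a) * ε) := by
        rw [show ENNReal.ofReal |f t - f a| = edist (f t) (f a) by rw [edist_dist, Real.dist_eq],
          show ENNReal.ofReal |f b - f t| = edist (f b) (f t) by rw [edist_dist, Real.dist_eq]]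
        ring
    _ ≤ _ := by
        apply add_le_add_right
        calc ENNReal.ofReal (2/9) * (ENNReal.ofReal (b-a) * ε)
            ≤ 1 * (ENNReal.ofReal (b-a) * ε) :=
              mul_le_mul_left (ofReal_le_one.mpr (by norm_num)) _
          _ = ENNReal.ofReal (b - a) * ε := one_mul _

lemma core_estimate (f : ℝ → ℝ) :
    eVariationOn (fun y => (1-y)^2/9 * f y) (Icc 0 (1/10)) ≤
      ENNReal.ofReal (1/9) * eVariationOn f (Icc 0 (1/10))
        + ENNReal.ofReal (2/9) * ∫⁻ x in Icc (0:ℝ) (1/10), (‖f x‖₊ : ℝ≥0∞) := by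
  apply ENNReal.le_of_forall_pos_le_add
  intro ε hε _
  have hε' : (0:ℝ≥0∞) < ε := by exact_mod_cast hε
  apply iSup_le
  rintro ⟨n, u, hu, us⟩
  have key : ∀ i : ℕ, ∃ t ∈ Icc (u i) (u (i+1)),
      edist ((1-(u (i+1)))^2/9 * f (u (i+1))) ((1-(u i))^2/9 * f (u i))
        ≤ ENNReal.ofReal (1/9) * (edist (f t) (f (u i)) + edist (f (u (i+1))) (f t))
          + ENNReal.ofReal (2/9) * (∫⁻ x in Icc (u i) (u (i+1)), (‖f x‖₊ : ℝ≥0∞))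
          + ENNReal.ofReal (u (i+1) - u i) * (ε : ℝ≥0∞) :=
    fun i => per_interval f (us i) (us (i+1)) (hu (Nat.le_succ i)) _ hε'
  choose t htmem hest using key
  calc ∑ i ∈ Finset.range n,
        edist ((fun y => (1-y)^2/9 * f y) (u (i+1))) ((fun y => (1-y)^2/9 * f y) (u i))
      ≤ ∑ i ∈ Finset.range n,
        (ENNReal.ofReal (1/9) * (edist (f (t i)) (f (u i)) + edist (f (u (i+1))) (f (t i)))
          + ENNReal.ofReal (2/9) * (∫⁻ x in Icc (u i) (u (i+1)), (‖f x‖₊ : ℝ≥0∞))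
          + ENNReal.ofReal (u (i+1) - u i) * (ε : ℝ≥0∞)) :=
        Finset.sum_le_sum fun i _ => hest i
    _ = ENNReal.ofReal (1/9) * (∑ i ∈ Finset.range n,
          (edist (f (t i)) (f (u i)) + edist (f (u (i+1))) (f (t i))))
        + ENNReal.ofReal (2/9) * (∑ i ∈ Finset.range n,
          ∫⁻ x in Icc (u i) (u (i+1)), (‖f x‖₊ : ℝ≥0∞))
        + (∑ i ∈ Finset.range n, ENNReal.ofReal (u (i+1) - u i)) * (ε : ℝ≥0∞) := by
        rw [Finset.sum_add_distrib, Finset.sum_add_distrib, ← Finset.mul_sum, ← Finset.mul_sum,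
          ← Finset.sum_mul]
    _ ≤ ENNReal.ofReal (1/9) * eVariationOn f (Icc 0 (1/10))
        + ENNReal.ofReal (2/9) * (∫⁻ x in Icc (0:ℝ) (1/10), (‖f x‖₊ : ℝ≥0∞)) + (ε : ℝ≥0∞) := by
        refine add_le_add (add_le_add (mul_le_mul_right ?_ _) (mul_le_mul_right ?_ _)) ?_
        · exact interleave_sum_le f _ n u t hu us Set.ordConnected_Icc htmem
        · refine (lint_sum_le _ u hu n).trans ?_
          exact lintegral_mono' (Measure.restrict_mono (Icc_subset_Icc (us 0).1 (us n).2) le_rfl)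
            le_rfl
        · have h1 : ∑ i ∈ Finset.range n, ENNReal.ofReal (u (i+1) - u i)
              = ENNReal.ofReal (u n - u 0) := by
            rw [← ENNReal.ofReal_sum_of_nonneg
              (fun i _ => sub_nonneg.2 (hu (Nat.le_succ i)))]
            congr 1
            exact Finset.sum_range_sub u n
          rw [h1]
          calc ENNReal.ofReal (u n - u 0) * (ε : ℝ≥0∞) ≤ 1 * ε := by
                apply mul_le_mul_left
                apply ofReal_le_one.mpr
                have := (us 0).1; have := (us n).2; linarith
            _ = ε := one_mul _


lemma phi_mono : MonotoneOn (fun x : ℝ => x/(9+x)) (Icc 0 1) := by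
  intro x hx y hy hxy
  have h1 : (0:ℝ) < 9 + x := by linarith [hx.1]
  have h2 : (0:ℝ) < 9 + y := by linarith [hy.1]
  dsimp only
  rw [div_le_div_iff₀ h1 h2]
  nlinarith

lemma phi_image : (fun x : ℝ => x/(9+x)) '' Icc 0 1 = Icc 0 (1/10) := by
  ext y
  constructor
  · rintro ⟨x, ⟨hx0, hx1⟩, rfl⟩
    have h1 : (0:ℝ) < 9 + x := by linarith
    constructor
    · positivity
    · rw [div_le_iff₀ h1]; linarith
  · rintro ⟨hy0, hy1⟩
    have h1 : (0:ℝ) < 1 - y := by linarith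
    refine ⟨9*y/(1-y), ⟨by positivity, ?_⟩, ?_⟩
    · rw [div_le_one h1]; linarith
    · have h2 : (0:ℝ) < 9 + 9*y/(1-y) := by positivity
      field_simp
      ring
lemma affine_mono (c : ℝ) : MonotoneOn (fun x : ℝ => (x+c)/10) (Icc 0 1) := by
  intro x _ y _ hxy; dsimp only; linarith

lemma affine_image (c : ℝ) : (fun x : ℝ => (x+c)/10) '' Icc 0 1 = Icc (c/10) ((c+1)/10) := by
  ext y
  constructor
  · rintro ⟨x, ⟨hx0, hx1⟩, rfl⟩
    exact ⟨by linarith, by linarith⟩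
  · rintro ⟨hy0, hy1⟩
    exact ⟨10*y - c, ⟨by linarith, by linarith⟩, by dsimp only; ring⟩

lemma evar_Icc_add_Icc (f : ℝ → ℝ) {p q r : ℝ} (h1 : p ≤ q) (h2 : q ≤ r) :
    eVariationOn f (Icc p q) + eVariationOn f (Icc q r) = eVariationOn f (Icc p r) := by
  have h := eVariationOn.Icc_add_Icc f (s := Icc p r) h1 h2 ⟨h1, h2⟩
  rw [Icc_inter_Icc, Icc_inter_Icc, Icc_inter_Icc, sup_idem, inf_idem, sup_eq_right.2 h1,
    inf_eq_right.2 h2] at h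
  exact h

lemma evar_chain (f : ℝ → ℝ) (a : ℕ → ℝ) (ha : Monotone a) (n : ℕ) :
    ∑ j ∈ Finset.range n, eVariationOn f (Icc (a j) (a (j+1)))
      ≤ eVariationOn f (Icc (a 0) (a n)) := by
  induction n with
  | zero => simp
  | succ n ih =>
      rw [Finset.sum_range_succ, ← evar_Icc_add_Icc f (ha (Nat.zero_le n)) (ha (Nat.le_succ n))]
      exact add_le_add_left ih _

lemma lint_mono_Icc (f : ℝ → ℝ) {a b c d : ℝ} (h1 : c ≤ a) (h2 : b ≤ d) :
    (∫⁻ x in Icc a b, (‖f x‖₊ : ℝ≥0∞)) ≤ ∫⁻ x in Icc c d, (‖f x‖₊ : ℝ≥0∞) :=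
  lintegral_mono' (Measure.restrict_mono (Icc_subset_Icc h1 h2) le_rfl) le_rfl

/-- the Perron–Frobenius operator of the map `T16` satisfies
`V(Pf) ≤ (1/9) V(f) + (2/9) ‖f‖₁` for all `f ∈ BV([0,1])`. -/
theorem lasota_yorke_example_map :
    ∀ f : ℝ → ℝ, BoundedVariationOn f (Set.Icc 0 1) →
      bvVar (P16 f) ≤ ENNReal.ofReal (1/9) * bvVar f + ENNReal.ofReal (2/9) * l1Norm f := by
  intro f _
  -- the nonlinear branch
  have hA : eVariationOn (fun x : ℝ => 9 / (9 + x) ^ 2 * f (x / (9 + x))) (Icc 0 1)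
      ≤ ENNReal.ofReal (1/9) * eVariationOn f (Icc 0 (1/10))
        + ENNReal.ofReal (2/9) * ∫⁻ x in Icc (0:ℝ) (1/10), (‖f x‖₊ : ℝ≥0∞) := by
    have he : eVariationOn (fun x : ℝ => 9 / (9 + x) ^ 2 * f (x / (9 + x))) (Icc 0 1)
        = eVariationOn ((fun y : ℝ => (1-y)^2/9 * f y) ∘ (fun x : ℝ => x/(9+x))) (Icc 0 1) := by
      apply eVariationOn.eq_of_eqOn
      intro x hx
      have h9 : (9:ℝ) + x ≠ 0 := by have := hx.1; positivity
      simp only [Function.comp_apply]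
      congr 1
      field_simp
      ring
    rw [he, eVariationOn.comp_eq_of_monotoneOn _ _ phi_mono, phi_image]
    exact core_estimate f
  -- the linear branches
  have hB : eVariationOn
        (fun x : ℝ => ∑ i ∈ (Finset.Icc 1 9 : Finset ℕ), (1/10 : ℝ) * f ((x + (i:ℝ))/10))
        (Icc 0 1)
      ≤ ENNReal.ofReal (1/10) * eVariationOn f (Icc (1/10) 1) := by
    refine (evar_sum_le _ _ _).trans ?_
    have hbranch : ∀ i ∈ (Finset.Icc 1 9 : Finset ℕ),
        eVariationOn (fun x : ℝ => (1/10 : ℝ) * f ((x + (i:ℝ))/10)) (Icc 0 1)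
          ≤ ENNReal.ofReal (1/10) * eVariationOn f (Icc ((i:ℝ)/10) (((i:ℝ)+1)/10)) := by
      intro i _
      have he : eVariationOn (fun x : ℝ => (1/10 : ℝ) * f ((x + (i:ℝ))/10)) (Icc 0 1)
          = eVariationOn ((fun y : ℝ => (1/10 : ℝ) * f y) ∘ (fun x : ℝ => (x + (i:ℝ))/10))
            (Icc 0 1) := rfl
      rw [he, eVariationOn.comp_eq_of_monotoneOn _ _ (affine_mono (i:ℝ)), affine_image (i:ℝ)]
      have h := evar_smul_le (1/10) f (Icc ((i:ℝ)/10) (((i:ℝ)+1)/10))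
      rw [show |(1:ℝ)/10| = 1/10 by norm_num] at h
      exact h
    refine (Finset.sum_le_sum hbranch).trans ?_
    rw [← Finset.mul_sum]
    apply mul_le_mul_right
    -- chain of intervals
    have hsum : ∑ i ∈ (Finset.Icc 1 9 : Finset ℕ),
        eVariationOn f (Icc ((i:ℝ)/10) (((i:ℝ)+1)/10))
        = ∑ j ∈ Finset.range 9,
          eVariationOn f (Icc ((((1+j:ℕ)):ℝ)/10) (((((1+j:ℕ)):ℝ)+1)/10)) := by
      rw [← Finset.Ico_add_one_right_eq_Icc, Finset.sum_Ico_eq_sum_range]; rfl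
    rw [hsum]
    set a : ℕ → ℝ := fun j => ((1+j : ℕ) : ℝ)/10 with ha
    have hamono : Monotone a := by
      intro x y hxy
      simp only [ha]
      have : ((1+x : ℕ) : ℝ) ≤ ((1+y : ℕ) : ℝ) := by exact_mod_cast Nat.add_le_add_left hxy 1
      linarith
    have hstep : ∀ j : ℕ, Icc ((((1+j:ℕ)):ℝ)/10) (((((1+j:ℕ)):ℝ)+1)/10) = Icc (a j) (a (j+1)) := by
      intro j
      have : ((((1+j:ℕ)):ℝ)+1)/10 = a (j+1) := by simp only [ha]; push_cast; ring
      rw [this]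
    simp_rw [hstep]
    refine (evar_chain f a hamono 9).trans ?_
    have h0 : a 0 = 1/10 := by simp [ha]
    have h9 : a 9 = 1 := by norm_num [ha]
    rw [h0, h9]
  -- combine
  calc bvVar (P16 f)
      ≤ eVariationOn (fun x : ℝ => 9 / (9 + x) ^ 2 * f (x / (9 + x))) (Icc 0 1)
        + eVariationOn
          (fun x : ℝ => ∑ i ∈ (Finset.Icc 1 9 : Finset ℕ), (1/10 : ℝ) * f ((x + (i:ℝ))/10))
          (Icc 0 1) := evar_add_le _ _ _
    _ ≤ (ENNReal.ofReal (1/9) * eVariationOn f (Icc 0 (1/10))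
          + ENNReal.ofReal (2/9) * ∫⁻ x in Icc (0:ℝ) (1/10), (‖f x‖₊ : ℝ≥0∞))
        + ENNReal.ofReal (1/10) * eVariationOn f (Icc (1/10) 1) := add_le_add hA hB
    _ ≤ (ENNReal.ofReal (1/9) * eVariationOn f (Icc 0 (1/10))
          + ENNReal.ofReal (2/9) * l1Norm f)
        + ENNReal.ofReal (1/9) * eVariationOn f (Icc (1/10) 1) := by
        apply add_le_add
        · exact add_le_add_right (mul_le_mul_right (lint_mono_Icc f le_rfl (by norm_num)) _) _
        · exact mul_le_mul_left (ofReal_le_ofReal (by norm_num)) _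
    _ = ENNReal.ofReal (1/9) * (eVariationOn f (Icc 0 (1/10)) + eVariationOn f (Icc (1/10) 1))
        + ENNReal.ofReal (2/9) * l1Norm f := by ring
    _ = ENNReal.ofReal (1/9) * bvVar f + ENNReal.ofReal (2/9) * l1Norm f := by
        rw [evar_Icc_add_Icc f (by norm_num) (by norm_num)]
        rfl
end
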